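/- Let I be a finite subset of Fin n with |I| = k, and let 0 ≤ m ≤ n. Then in the Clifford algebra Cl = ℝ_{p,q}, the sum of e_J · e_I · e^J over all subsets J of Fin n with |J| = m equals ( ∑_{ℓ=0}^{m} (−1)^{(m−ℓ)·k + ℓ·(k−1)} · C(n−k, m−ℓ) · C(k, ℓ) ) · e_I, where the integer coefficient acts by integer scalar multiplication and C(a,b) is the binomial coefficient (zero when b > a). -/

import Mathlib

noncomputable section

/-- The weights of the quadratic form of signature `(p, q)`: `1` for the first `p`
coordinates and `-1` for the remaining ones. -/
def cliffordWeight (p : ℕ) {n : ℕ} (i : Fin n) : ℝ := if (i : ℕ) < p then 1 else -1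

/-- The quadratic form of signature `(p, q)` on `Fin (p + q) → ℝ`. -/
def cliffordQ (p q : ℕ) : QuadraticForm ℝ (Fin (p + q) → ℝ) :=
  QuadraticMap.weightedSumSquares ℝ (cliffordWeight p)

/-- The generator `e i` of the Clifford algebra `ℝ_{p,q}`. -/
def cliffordE (p q : ℕ) (i : Fin (p + q)) : CliffordAlgebra (cliffordQ p q) :=
  CliffordAlgebra.ι (cliffordQ p q) (Pi.single i 1)

/-- `e_J`: the product of the generators `e j` for `j ∈ J`, in increasing order. -/
def eLower (p q : ℕ) (J : Finset (Fin (p + q))) : CliffordAlgebra (cliffordQ p q) :=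
  ((J.sort (· ≤ ·)).map (cliffordE p q)).prod

/-- `e^J`: the product of the elements `w j • e j` for `j ∈ J`, in decreasing order. -/
def eUpper (p q : ℕ) (J : Finset (Fin (p + q))) : CliffordAlgebra (cliffordQ p q) :=
  ((J.sort (· ≤ ·)).reverse.map (fun j => cliffordWeight p j • cliffordE p q j)).prod

lemma cliffordWeight_mul_self (p : ℕ) {n : ℕ} (i : Fin n) :
    cliffordWeight p i * cliffordWeight p i = 1 := by
  unfold cliffordWeight; split <;> norm_num

lemma cliffordQ_single (p q : ℕ) (i : Fin (p + q)) :
    cliffordQ p q (Pi.single i 1) = cliffordWeight p i := by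
  rw [cliffordQ, QuadraticMap.weightedSumSquares_apply]
  rw [Finset.sum_eq_single i]
  · simp
  · intro j _ hj; simp [Pi.single_apply, hj]
  · simp

lemma cliffordE_sq (p q : ℕ) (i : Fin (p + q)) :
    cliffordE p q i * cliffordE p q i = algebraMap ℝ _ (cliffordWeight p i) := by
  rw [cliffordE, CliffordAlgebra.ι_sq_scalar, cliffordQ_single]

lemma cliffordE_anticomm (p q : ℕ) {i j : Fin (p + q)} (h : i ≠ j) :
    cliffordE p q i * cliffordE p q j = - (cliffordE p q j * cliffordE p q i) := by
  have hpol : QuadraticMap.polar (cliffordQ p q) (Pi.single i 1) (Pi.single j 1) = 0 := by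
    rw [QuadraticMap.polar, cliffordQ]
    simp only [QuadraticMap.weightedSumSquares_apply]
    rw [← Finset.sum_sub_distrib, ← Finset.sum_sub_distrib]
    apply Finset.sum_eq_zero
    intro x _
    rcases eq_or_ne x i with rfl|hx <;> rcases eq_or_ne x j with rfl|hy <;>
      simp_all [Pi.single_apply, Pi.add_apply]
  have := CliffordAlgebra.ι_mul_ι_add_swap (Q := cliffordQ p q) (Pi.single i 1) (Pi.single j 1)
  rw [hpol, map_zero] at this
  rw [cliffordE, cliffordE]
  rw [eq_neg_iff_add_eq_zero]
  exact this

def prodE (p q : ℕ) (L : List (Fin (p + q))) : CliffordAlgebra (cliffordQ p q) :=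
  (L.map (cliffordE p q)).prod

@[simp] lemma prodE_nil (p q : ℕ) : prodE p q [] = 1 := rfl

@[simp] lemma prodE_cons (p q : ℕ) (j : Fin (p+q)) (L : List (Fin (p+q))) :
    prodE p q (j :: L) = cliffordE p q j * prodE p q L := by
  simp [prodE]

lemma prodE_mul_e (p q : ℕ) (j : Fin (p+q)) (L : List (Fin (p+q))) (hj : j ∉ L) :
    prodE p q L * cliffordE p q j = ((-1 : ℤ) ^ L.length) • (cliffordE p q j * prodE p q L) := by
  induction L with
  | nil => simp
  | cons i L ih =>
    have hij : i ≠ j := by rintro rfl; exact hj List.mem_cons_self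
    have hjL : j ∉ L := fun h => hj (List.mem_cons_of_mem _ h)
    rw [prodE_cons, mul_assoc, ih hjL, mul_smul_comm]
    rw [← mul_assoc, cliffordE_anticomm p q hij]
    simp only [List.length_cons, neg_mul, smul_neg, pow_succ]
    rw [mul_comm ((-1:ℤ)^L.length) (-1), mul_smul]
    simp [mul_assoc]

lemma e_mul_prodE_mul (p q : ℕ) (j : Fin (p+q)) (L : List (Fin (p+q))) (hL : L.Nodup) :
    cliffordE p q j * prodE p q L * (cliffordWeight p j • cliffordE p q j) =
      ((-1 : ℤ) ^ (if j ∈ L then L.length + 1 else L.length)) • prodE p q L := by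
  induction L with
  | nil =>
    simp only [prodE_nil, mul_one, List.not_mem_nil, if_false, List.length_nil, pow_zero, one_smul]
    rw [mul_smul_comm, cliffordE_sq, Algebra.smul_def, ← map_mul, cliffordWeight_mul_self]
    simp
  | cons i L ih =>
    have hL' : L.Nodup := (List.nodup_cons.mp hL).2
    rcases eq_or_ne j i with rfl|hij
    · have hjL : j ∉ L := (List.nodup_cons.mp hL).1
      simp only [List.mem_cons, true_or, if_true]
      rw [prodE_cons, ← mul_assoc, cliffordE_sq, ← Algebra.smul_def,
        smul_mul_assoc, mul_smul_comm, smul_smul, cliffordWeight_mul_self,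
        one_smul, prodE_mul_e p q j L hjL]
      congr 1
      simp [pow_succ]
    · have hmem : (j ∈ i :: L) ↔ (j ∈ L) := by simp [hij]
      rw [prodE_cons, ← mul_assoc, cliffordE_anticomm p q hij]
      simp only [neg_mul]
      rw [mul_assoc (cliffordE p q i * cliffordE p q j),
        mul_assoc (cliffordE p q i), ← mul_assoc (cliffordE p q j), ih hL',
        mul_smul_comm, ← neg_smul]
      congr 1
      simp only [List.mem_cons, hij, false_or, List.length_cons]
      split_ifs <;> simp [pow_succ]

def prodUpper (p q : ℕ) (L : List (Fin (p + q))) : CliffordAlgebra (cliffordQ p q) :=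
  (L.reverse.map (fun j => cliffordWeight p j • cliffordE p q j)).prod

@[simp] lemma prodUpper_nil (p q : ℕ) : prodUpper p q [] = 1 := rfl

@[simp] lemma prodUpper_cons (p q : ℕ) (j : Fin (p+q)) (L : List (Fin (p+q))) :
    prodUpper p q (j :: L) = prodUpper p q L * (cliffordWeight p j • cliffordE p q j) := by
  simp [prodUpper]

lemma conj_prodE (p q : ℕ) (I : Finset (Fin (p+q))) (L : List (Fin (p+q))) (hL : L.Nodup) :
    prodE p q L * eLower p q I * prodUpper p q L =
      ((-1 : ℤ) ^ ((L.filter (· ∉ I)).length * I.card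
          + (L.filter (· ∈ I)).length * (I.card + 1))) • eLower p q I := by
  induction L with
  | nil => simp
  | cons j L ih =>
    have hL' : L.Nodup := (List.nodup_cons.mp hL).2
    have key : cliffordE p q j * eLower p q I * (cliffordWeight p j • cliffordE p q j) =
        ((-1 : ℤ) ^ (if j ∈ I then I.card + 1 else I.card)) • eLower p q I := by
      have := e_mul_prodE_mul p q j (I.sort (· ≤ ·)) (I.sort_nodup _)
      simp only [Finset.length_sort, Finset.mem_sort] at this
      exact this
    rw [prodE_cons, prodUpper_cons,
      show (cliffordE p q j * prodE p q L) * eLower p q I *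
          (prodUpper p q L * (cliffordWeight p j • cliffordE p q j)) =
        cliffordE p q j * (prodE p q L * eLower p q I * prodUpper p q L) *
          (cliffordWeight p j • cliffordE p q j) by simp only [mul_assoc],
      ih hL', mul_smul_comm _ (cliffordE p q j) (eLower p q I), smul_mul_assoc, key,
      smul_smul, ← pow_add]
    congr 2
    by_cases hj : j ∈ I <;> simp [List.filter_cons, hj] <;> ring

lemma count_card {n : ℕ} (I : Finset (Fin n)) (l m : ℕ) (hl : l ≤ m) :
    ((Finset.powersetCard m (Finset.univ : Finset (Fin n))).filter
        (fun J => (J ∩ I).card = l)).card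
      = (n - I.card).choose (m - l) * (I.card).choose l := by
  have : ((Finset.powersetCard m (Finset.univ : Finset (Fin n))).filter
        (fun J => (J ∩ I).card = l)).card
      = ((Finset.powersetCard (m - l) Iᶜ) ×ˢ (Finset.powersetCard l I)).card := by
    apply Finset.card_bij' (fun J _ => (J \ I, J ∩ I)) (fun P _ => P.1 ∪ P.2)
    · intro J hJ
      simp only [Finset.mem_filter, Finset.mem_powersetCard] at hJ
      obtain ⟨⟨-, hJm⟩, hJl⟩ := hJ
      have hsd : (J \ I).card = m - l := by
        have := Finset.card_sdiff_add_card_inter J I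
        omega
      simp only [Finset.mem_product, Finset.mem_powersetCard]
      refine ⟨⟨?_, hsd⟩, Finset.inter_subset_right, hJl⟩
      intro x hx
      simp only [Finset.mem_sdiff] at hx
      simpa [Finset.mem_compl] using hx.2
    · intro P hP
      simp only [Finset.mem_product, Finset.mem_powersetCard] at hP
      obtain ⟨⟨hB, hBc⟩, hA, hAc⟩ := hP
      have hdisj : Disjoint P.1 P.2 := by
        refine Finset.disjoint_left.mpr fun x hx hx' => ?_
        have := hB hx
        simp only [Finset.mem_compl] at this
        exact this (hA hx')
      simp only [Finset.mem_filter, Finset.mem_powersetCard]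
      have hcap : (P.1 ∪ P.2) ∩ I = P.2 := by
        ext x
        simp only [Finset.mem_inter, Finset.mem_union]
        constructor
        · rintro ⟨h1 | h2, hxI⟩
          · exact absurd hxI (by simpa [Finset.mem_compl] using hB h1)
          · exact h2
        · intro h
          exact ⟨Or.inr h, hA h⟩
      refine ⟨⟨Finset.subset_univ _, ?_⟩, by rw [hcap, hAc]⟩
      rw [Finset.card_union_of_disjoint hdisj, hBc, hAc]
      omega
    · intro J hJ
      exact Finset.sdiff_union_inter J I
    · intro P hP
      simp only [Finset.mem_product, Finset.mem_powersetCard] at hP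
      obtain ⟨⟨hB, hBc⟩, hA, hAc⟩ := hP
      have hcap : (P.1 ∪ P.2) ∩ I = P.2 := by
        ext x
        simp only [Finset.mem_inter, Finset.mem_union]
        constructor
        · rintro ⟨h1 | h2, hxI⟩
          · exact absurd hxI (by simpa [Finset.mem_compl] using hB h1)
          · exact h2
        · intro h
          exact ⟨Or.inr h, hA h⟩
      have hsd : (P.1 ∪ P.2) \ I = P.1 := by
        ext x
        simp only [Finset.mem_sdiff, Finset.mem_union]
        constructor
        · rintro ⟨h1 | h2, hxI⟩
          · exact h1
          · exact absurd (hA h2) hxI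
        · intro h
          exact ⟨Or.inl h, by simpa [Finset.mem_compl] using hB h⟩
      exact Prod.ext hsd hcap
  rw [this, Finset.card_product, Finset.card_powersetCard, Finset.card_powersetCard,
    Finset.card_compl, Fintype.card_fin]

lemma filter_sort_length {n : ℕ} (J : Finset (Fin n)) (pred : Fin n → Prop)
    [DecidablePred pred] :
    ((J.sort (· ≤ ·)).filter (fun x => decide (pred x))).length = (J.filter pred).card := by
  have hp := (Finset.sort_perm_toList (s := J) (r := (· ≤ ·))).filter (fun x => decide (pred x))
  rw [hp.length_eq]
  rw [← List.countP_eq_length_filter]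
  rw [Finset.card_filter]
  rw [← Multiset.coe_countP, Finset.coe_toList]
  simp [Multiset.countP_eq_card_filter, Finset.filter_val]
  rfl

theorem sum_eLower_mul_eUpper_card (p q k m : ℕ) (hm : m ≤ p + q)
    (I : Finset (Fin (p + q))) (hI : I.card = k) :
    ∑ J ∈ Finset.powersetCard m (Finset.univ : Finset (Fin (p + q))),
        eLower p q J * eLower p q I * eUpper p q J =
      (∑ l ∈ Finset.range (m + 1),
          (-1 : ℤ) ^ ((m - l) * k + l * (k - 1)) * (p + q - k).choose (m - l) * k.choose l) •
        eLower p q I := by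
  subst hI
  have step1 : ∀ J ∈ Finset.powersetCard m (Finset.univ : Finset (Fin (p + q))),
      eLower p q J * eLower p q I * eUpper p q J =
        ((-1 : ℤ) ^ ((m - (J ∩ I).card) * I.card + (J ∩ I).card * (I.card + 1))) •
          eLower p q I := by
    intro J hJ
    have hJm : J.card = m := (Finset.mem_powersetCard.mp hJ).2
    have hconj := conj_prodE p q I (J.sort (· ≤ ·)) (J.sort_nodup _)
    have hmem : ((J.sort (· ≤ ·)).filter (fun x => decide (x ∈ I))).length = (J ∩ I).card := by
      rw [filter_sort_length, Finset.filter_mem_eq_inter]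
    have hnot : ((J.sort (· ≤ ·)).filter (fun x => decide (x ∉ I))).length
        = m - (J ∩ I).card := by
      rw [filter_sort_length, Finset.filter_not, Finset.filter_mem_eq_inter,
        Finset.card_sdiff_of_subset Finset.inter_subset_left, hJm]
    rw [hmem, hnot] at hconj
    exact hconj
  rw [Finset.sum_congr rfl step1, ← Finset.sum_smul]
  congr 1
  have hmaps : ∀ J ∈ Finset.powersetCard m (Finset.univ : Finset (Fin (p + q))),
      (J ∩ I).card ∈ Finset.range (m + 1) := by
    intro J hJ
    have hJm : J.card = m := (Finset.mem_powersetCard.mp hJ).2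
    have := Finset.card_le_card (Finset.inter_subset_left (s₁ := J) (s₂ := I))
    rw [Finset.mem_range]
    omega
  rw [← Finset.sum_fiberwise_of_maps_to hmaps
    (fun J => ((-1 : ℤ) ^ ((m - (J ∩ I).card) * I.card + (J ∩ I).card * (I.card + 1))))]
  refine Finset.sum_congr rfl fun l hl => ?_
  rw [Finset.mem_range] at hl
  have hlm : l ≤ m := by omega
  have hin : ∑ J ∈ (Finset.powersetCard m (Finset.univ : Finset (Fin (p + q)))).filter
        (fun J => (J ∩ I).card = l),
      ((-1 : ℤ) ^ ((m - (J ∩ I).card) * I.card + (J ∩ I).card * (I.card + 1)))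
      = ∑ _J ∈ (Finset.powersetCard m (Finset.univ : Finset (Fin (p + q)))).filter
        (fun J => (J ∩ I).card = l),
      ((-1 : ℤ) ^ ((m - l) * I.card + l * (I.card + 1))) := by
    refine Finset.sum_congr rfl fun J hJ => ?_
    rw [(Finset.mem_filter.mp hJ).2]
  rw [hin, Finset.sum_const, count_card I l m hlm, nsmul_eq_mul]
  by_cases hlk : l ≤ I.card
  · rcases Nat.eq_zero_or_pos l with rfl | hl0
    · push_cast; ring
    · obtain ⟨k', hk'⟩ : ∃ k', I.card = k' + 1 := ⟨I.card - 1, by omega⟩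
      rw [hk']
      have hexp : (m - l) * (k' + 1) + l * (k' + 1 + 1)
          = ((m - l) * (k' + 1) + l * (k' + 1 - 1)) + 2 * l := by
        simp only [Nat.add_sub_cancel]
        ring
      rw [hexp, pow_add, pow_mul, neg_one_sq, one_pow, mul_one]
      push_cast; ring
  · rw [Nat.choose_eq_zero_of_lt (show I.card < l by omega)]
    push_cast; ring
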